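/- There exists a constant C > 0 such that for every function û of class C⁴ on a neighborhood of K̂ = [−1,1]² and every v̂ in the reference shape space P̂ = P₂(K̂) + span{ξ₁³, ξ₂³}, the functional B₂ satisfies |B₂(û, v̂)| ≤ C |û|_{H⁴(K̂)} |v̂|_{H²(K̂)}. -/

import Mathlib

open MeasureTheory

/-- Partial derivative in the first variable of a curried function on `ℝ²`. -/
noncomputable def pdx (f : ℝ → ℝ → ℝ) : ℝ → ℝ → ℝ := fun x y => deriv (fun t => f t y) x

/-- Partial derivative in the second variable of a curried function on `ℝ²`. -/
noncomputable def pdy (f : ℝ → ℝ → ℝ) : ℝ → ℝ → ℝ := fun x y => deriv (fun t => f x t) y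

/-- Membership in the shape space `P(K) = P₂(K) + span{x₁³, x₂³}` of the two-dimensional
rectangular Morley element. -/
def MorleyShape2 (w : ℝ → ℝ → ℝ) : Prop :=
  ∃ c0 c1 c2 c3 c4 c5 c6 c7 : ℝ, ∀ x y : ℝ,
    w x y = c0 + c1 * x + c2 * y + c3 * x ^ 2 + c4 * (x * y) + c5 * y ^ 2
      + c6 * x ^ 3 + c7 * y ^ 3

/-- The `H²` seminorm of `v` on the rectangle `[a,b] × [c,d]`, each ordering of mixed
partial derivatives counted. -/
noncomputable def semiH2R (v : ℝ → ℝ → ℝ) (a b c d : ℝ) : ℝ :=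
  Real.sqrt (∫ x in a..b, ∫ y in c..d,
    (pdx (pdx v) x y) ^ 2 + (pdx (pdy v) x y) ^ 2 + (pdy (pdx v) x y) ^ 2
      + (pdy (pdy v) x y) ^ 2)

/-- The `H⁴` seminorm of `u` on the rectangle `[a,b] × [c,d]`, each ordering of mixed
partial derivatives counted (hence the binomial coefficients). -/
noncomputable def semiH4R (u : ℝ → ℝ → ℝ) (a b c d : ℝ) : ℝ :=
  Real.sqrt (∫ x in a..b, ∫ y in c..d,
    (pdx (pdx (pdx (pdx u))) x y) ^ 2 + 4 * (pdx (pdx (pdx (pdy u))) x y) ^ 2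
      + 6 * (pdx (pdx (pdy (pdy u))) x y) ^ 2 + 4 * (pdx (pdy (pdy (pdy u))) x y) ^ 2
      + (pdy (pdy (pdy (pdy u))) x y) ^ 2)

/-- `u` is of class `C⁴` on a neighborhood of the rectangle `[a,b] × [c,d]`. -/
def C4Near (u : ℝ → ℝ → ℝ) (a b c d : ℝ) : Prop :=
  ∃ U : Set (ℝ × ℝ), IsOpen U ∧ Set.Icc a b ×ˢ Set.Icc c d ⊆ U ∧
    ContDiffOn ℝ 4 (fun p : ℝ × ℝ => u p.1 p.2) U

/-- The functional `B₂` on the reference square `[-1,1]²`. -/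
noncomputable def B2 (u v : ℝ → ℝ → ℝ) : ℝ :=
  (1 / 3) * (∫ x in (-1:ℝ)..1, ∫ y in (-1:ℝ)..1,
      pdx (pdy (pdy u)) x y * pdx (pdx (pdx v)) x y)
    + (1 / 3) * (∫ x in (-1:ℝ)..1, ∫ y in (-1:ℝ)..1,
      pdx (pdx (pdy u)) x y * pdy (pdy (pdy v)) x y)
    - (1 / 6) * (∫ x in (-1:ℝ)..1, ∫ y in (-1:ℝ)..1,
      (∫ t in (-1:ℝ)..1, pdx (pdy (pdy u)) 1 t) * pdx (pdx (pdx v)) x y)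
    - (1 / 6) * (∫ x in (-1:ℝ)..1, ∫ y in (-1:ℝ)..1,
      (∫ t in (-1:ℝ)..1, pdx (pdx (pdy u)) t (-1)) * pdy (pdy (pdy v)) x y)


namespace M

noncomputable def Dx (F : ℝ × ℝ → ℝ) : ℝ × ℝ → ℝ := fun p => fderiv ℝ F p (1, 0)
noncomputable def Dy (F : ℝ × ℝ → ℝ) : ℝ × ℝ → ℝ := fun p => fderiv ℝ F p (0, 1)

lemma hasDerivAt_sliceX {F : ℝ × ℝ → ℝ} {x y : ℝ} (hF : DifferentiableAt ℝ F (x, y)) :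
    HasDerivAt (fun t => F (t, y)) (Dx F (x, y)) x := by
  have h1 : HasDerivAt (fun t : ℝ => (t, y)) (((1 : ℝ), (0 : ℝ))) x :=
    (hasDerivAt_id x).prodMk (hasDerivAt_const x y)
  have := hF.hasFDerivAt.comp_hasDerivAt x h1
  exact this

lemma hasDerivAt_sliceY {F : ℝ × ℝ → ℝ} {x y : ℝ} (hF : DifferentiableAt ℝ F (x, y)) :
    HasDerivAt (fun t => F (x, t)) (Dy F (x, y)) y := by
  have h1 : HasDerivAt (fun t : ℝ => (x, t)) (((0 : ℝ), (1 : ℝ))) y :=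
    (hasDerivAt_const y x).prodMk (hasDerivAt_id y)
  have := hF.hasFDerivAt.comp_hasDerivAt y h1
  exact this

lemma pdx_eqOn {u : ℝ → ℝ → ℝ} {F : ℝ × ℝ → ℝ} {U : Set (ℝ × ℝ)} (hU : IsOpen U)
    (h : ∀ p ∈ U, u p.1 p.2 = F p) (hF : DifferentiableOn ℝ F U) :
    ∀ p ∈ U, pdx u p.1 p.2 = Dx F p := by
  intro p hp
  have hd : DifferentiableAt ℝ F p := (hF p hp).differentiableAt (hU.mem_nhds hp)
  have hop : IsOpen {t : ℝ | (t, p.2) ∈ U} := hU.preimage (by fun_prop)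
  have hev : (fun t => u t p.2) =ᶠ[nhds p.1] fun t => F (t, p.2) := by
    filter_upwards [hop.mem_nhds (by simpa using hp)] with t ht using h (t, p.2) ht
  show deriv (fun t => u t p.2) p.1 = _
  rw [hev.deriv_eq]
  exact (hasDerivAt_sliceX (by simpa using hd)).deriv

lemma pdy_eqOn {u : ℝ → ℝ → ℝ} {F : ℝ × ℝ → ℝ} {U : Set (ℝ × ℝ)} (hU : IsOpen U)
    (h : ∀ p ∈ U, u p.1 p.2 = F p) (hF : DifferentiableOn ℝ F U) :
    ∀ p ∈ U, pdy u p.1 p.2 = Dy F p := by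
  intro p hp
  have hd : DifferentiableAt ℝ F p := (hF p hp).differentiableAt (hU.mem_nhds hp)
  have hop : IsOpen {t : ℝ | (p.1, t) ∈ U} := hU.preimage (by fun_prop)
  have hev : (fun t => u p.1 t) =ᶠ[nhds p.2] fun t => F (p.1, t) := by
    filter_upwards [hop.mem_nhds (by simpa using hp)] with t ht using h (p.1, t) ht
  show deriv (fun t => u p.1 t) p.2 = _
  rw [hev.deriv_eq]
  exact (hasDerivAt_sliceY (by simpa using hd)).deriv

lemma Dx_contDiffOn {F : ℝ × ℝ → ℝ} {U : Set (ℝ × ℝ)} {n m : WithTop ℕ∞} (hU : IsOpen U)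
    (hF : ContDiffOn ℝ n F U) (h : m + 1 ≤ n) : ContDiffOn ℝ m (Dx F) U := by
  have h1 : ContDiffOn ℝ m (fderiv ℝ F) U := hF.fderiv_of_isOpen hU h
  exact (ContinuousLinearMap.apply ℝ ℝ (((1 : ℝ), (0 : ℝ)))).contDiff.comp_contDiffOn h1

lemma Dy_contDiffOn {F : ℝ × ℝ → ℝ} {U : Set (ℝ × ℝ)} {n m : WithTop ℕ∞} (hU : IsOpen U)
    (hF : ContDiffOn ℝ n F U) (h : m + 1 ≤ n) : ContDiffOn ℝ m (Dy F) U := by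
  have h1 : ContDiffOn ℝ m (fderiv ℝ F) U := hF.fderiv_of_isOpen hU h
  exact (ContinuousLinearMap.apply ℝ ℝ (((0 : ℝ), (1 : ℝ)))).contDiff.comp_contDiffOn h1

lemma stepx {g : ℝ → ℝ → ℝ} {F : ℝ × ℝ → ℝ} {U : Set (ℝ × ℝ)} (hU : IsOpen U)
    {m n : WithTop ℕ∞} (h : ∀ p ∈ U, g p.1 p.2 = F p) (hF : ContDiffOn ℝ n F U)
    (hmn : m + 1 ≤ n) :
    (∀ p ∈ U, pdx g p.1 p.2 = Dx F p) ∧ ContDiffOn ℝ m (Dx F) U :=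
  ⟨pdx_eqOn hU h (hF.differentiableOn (lt_of_lt_of_le zero_lt_one (le_trans le_add_self hmn)).ne'), Dx_contDiffOn hU hF hmn⟩

lemma stepy {g : ℝ → ℝ → ℝ} {F : ℝ × ℝ → ℝ} {U : Set (ℝ × ℝ)} (hU : IsOpen U)
    {m n : WithTop ℕ∞} (h : ∀ p ∈ U, g p.1 p.2 = F p) (hF : ContDiffOn ℝ n F U)
    (hmn : m + 1 ≤ n) :
    (∀ p ∈ U, pdy g p.1 p.2 = Dy F p) ∧ ContDiffOn ℝ m (Dy F) U :=
  ⟨pdy_eqOn hU h (hF.differentiableOn (lt_of_lt_of_le zero_lt_one (le_trans le_add_self hmn)).ne'), Dy_contDiffOn hU hF hmn⟩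

lemma Dx_congr {F G : ℝ × ℝ → ℝ} {U : Set (ℝ × ℝ)} (hU : IsOpen U)
    (h : ∀ q ∈ U, F q = G q) {p : ℝ × ℝ} (hp : p ∈ U) : Dx F p = Dx G p := by
  have hev : F =ᶠ[nhds p] G := by
    filter_upwards [hU.mem_nhds hp] with q hq using h q hq
  simp only [Dx, hev.fderiv_eq]

lemma clairaut {F : ℝ × ℝ → ℝ} {U : Set (ℝ × ℝ)} (hU : IsOpen U)
    (hF : ContDiffOn ℝ 2 F U) {p : ℝ × ℝ} (hp : p ∈ U) :
    Dx (Dy F) p = Dy (Dx F) p := by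
  have hsymm : IsSymmSndFDerivAt ℝ F p :=
    (hF.contDiffAt (hU.mem_nhds hp)).isSymmSndFDerivAt (by norm_num)
  have hfd : DifferentiableAt ℝ (fderiv ℝ F) p := by
    have h1 : ContDiffOn ℝ 1 (fderiv ℝ F) U := hF.fderiv_of_isOpen hU (by norm_num)
    exact (h1.differentiableOn one_ne_zero p hp).differentiableAt (hU.mem_nhds hp)
  have key : ∀ v w : ℝ × ℝ, fderiv ℝ (fun q => fderiv ℝ F q w) p v
      = fderiv ℝ (fderiv ℝ F) p v w := by
    intro v w
    have := fderiv_clm_apply hfd (differentiableAt_const w)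
    rw [this]
    simp
  calc Dx (Dy F) p = fderiv ℝ (fun q => fderiv ℝ F q (0, 1)) p (1, 0) := rfl
    _ = fderiv ℝ (fderiv ℝ F) p (1, 0) (0, 1) := key _ _
    _ = fderiv ℝ (fderiv ℝ F) p (0, 1) (1, 0) := hsymm _ _
    _ = Dy (Dx F) p := (key _ _).symm

lemma uIcc_eq : Set.uIcc (-1 : ℝ) 1 = Set.Icc (-1 : ℝ) 1 := Set.uIcc_of_le (by norm_num)
lemma uIoc_eq : Set.uIoc (-1 : ℝ) 1 = Set.Ioc (-1 : ℝ) 1 := Set.uIoc_of_le (by norm_num)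

lemma contOn_param {F : ℝ × ℝ → ℝ} {U : Set (ℝ × ℝ)} (hU : IsOpen U)
    (hK : Set.Icc (-1 : ℝ) 1 ×ˢ Set.Icc (-1 : ℝ) 1 ⊆ U) (hF : ContinuousOn F U) :
    ContinuousOn (fun x => ∫ y in (-1 : ℝ)..1, F (x, y)) (Set.Icc (-1) 1) := by
  obtain ⟨Mb, hM⟩ : ∃ Mb, ∀ q ∈ Set.Icc (-1 : ℝ) 1 ×ˢ Set.Icc (-1 : ℝ) 1, ‖F q‖ ≤ Mb :=
    (isCompact_Icc.prod isCompact_Icc).exists_bound_of_continuousOn (hF.mono hK)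
  intro x₀ hx₀
  apply intervalIntegral.continuousWithinAt_of_dominated_interval (bound := fun _ => Mb)
  · filter_upwards [self_mem_nhdsWithin] with x hx
    have hc : ContinuousOn (fun y => F (x, y)) (Set.Ioc (-1 : ℝ) 1) := by
      apply (hF.comp (Continuous.continuousOn (by fun_prop)))
      intro y hy
      exact hK ⟨hx, Set.Ioc_subset_Icc_self hy⟩
    rw [uIoc_eq]
    exact hc.aestronglyMeasurable measurableSet_Ioc
  · filter_upwards [self_mem_nhdsWithin] with x hx
    apply MeasureTheory.ae_of_all
    intro t ht
    rw [uIoc_eq] at ht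
    exact hM (x, t) ⟨hx, Set.Ioc_subset_Icc_self ht⟩
  · exact intervalIntegrable_const
  · apply MeasureTheory.ae_of_all
    intro t ht
    rw [uIoc_eq] at ht
    have hat : ContinuousAt F (x₀, t) :=
      hF.continuousAt (hU.mem_nhds (hK ⟨hx₀, Set.Ioc_subset_Icc_self ht⟩))
    have hg : ContinuousAt (fun x : ℝ => (x, t)) x₀ :=
      (continuous_id.prodMk continuous_const).continuousAt
    exact (ContinuousAt.comp (g := F) (f := fun x : ℝ => (x, t)) hat hg).continuousWithinAt

lemma contOn_param' {F : ℝ × ℝ → ℝ} {U : Set (ℝ × ℝ)} (hU : IsOpen U)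
    (hK : Set.Icc (-1 : ℝ) 1 ×ˢ Set.Icc (-1 : ℝ) 1 ⊆ U) (hF : ContinuousOn F U) :
    ContinuousOn (fun y => ∫ x in (-1 : ℝ)..1, F (x, y)) (Set.Icc (-1) 1) := by
  have hU' : IsOpen (Prod.swap ⁻¹' U : Set (ℝ × ℝ)) := hU.preimage continuous_swap
  have hK' : Set.Icc (-1 : ℝ) 1 ×ˢ Set.Icc (-1 : ℝ) 1 ⊆ Prod.swap ⁻¹' U := by
    intro q hq; exact hK ⟨hq.2, hq.1⟩
  have hF' : ContinuousOn (F ∘ Prod.swap) (Prod.swap ⁻¹' U) :=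
    hF.comp continuous_swap.continuousOn (fun q hq => hq)
  exact contOn_param hU' hK' hF'

lemma eps_bound {X J : ℝ} (hJ : 0 ≤ J) (h : ∀ ε > (0 : ℝ), X ≤ 4 * ε + J / ε) :
    X ≤ 4 * Real.sqrt J := by
  rcases eq_or_lt_of_le hJ with hJ0 | hJ0
  · have h0 : X ≤ 0 := by
      by_contra hX
      push_neg at hX
      have := h (X / 8) (by linarith)
      rw [← hJ0] at this
      simp at this
      linarith
    have : Real.sqrt J = 0 := by rw [← hJ0]; simp
    rw [this]; linarith
  · have hs : Real.sqrt J > 0 := Real.sqrt_pos.2 hJ0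
    have hsq : Real.sqrt J * Real.sqrt J = J := Real.mul_self_sqrt hJ
    have := h (Real.sqrt J / 2) (by linarith)
    have hdiv : J / (Real.sqrt J / 2) = 2 * Real.sqrt J := by
      field_simp
      nlinarith
    rw [hdiv] at this
    linarith

lemma swap_sq {Q : ℝ × ℝ → ℝ} {U : Set (ℝ × ℝ)}
    (hK : Set.Icc (-1 : ℝ) 1 ×ˢ Set.Icc (-1 : ℝ) 1 ⊆ U) (hQ : ContinuousOn Q U) :
    (∫ y in (-1 : ℝ)..1, ∫ s in (-1 : ℝ)..1, (Q (s, y)) ^ 2)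
      = ∫ x in (-1 : ℝ)..1, ∫ y in (-1 : ℝ)..1, (Q (x, y)) ^ 2 := by
  have hle : (-1 : ℝ) ≤ 1 := by norm_num
  have hgK : ContinuousOn (fun p : ℝ × ℝ => (Q (p.2, p.1)) ^ 2)
      (Set.Icc (-1 : ℝ) 1 ×ˢ Set.Icc (-1 : ℝ) 1) := by
    apply ContinuousOn.pow
    apply hQ.comp continuous_swap.continuousOn
    intro p hp
    exact hK ⟨hp.2, hp.1⟩
  have hint : Integrable (Function.uncurry fun y s => (Q (s, y)) ^ 2)
      ((volume.restrict (Set.Ioc (-1 : ℝ) 1)).prod (volume.restrict (Set.Ioc (-1 : ℝ) 1))) := by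
    rw [Measure.prod_restrict]
    have h1 : IntegrableOn (fun p : ℝ × ℝ => (Q (p.2, p.1)) ^ 2)
        (Set.Icc (-1 : ℝ) 1 ×ˢ Set.Icc (-1 : ℝ) 1) (volume.prod volume) := by
      rw [← Measure.volume_eq_prod]
      exact hgK.integrableOn_compact (isCompact_Icc.prod isCompact_Icc)
    exact (h1.mono_set (Set.prod_mono Set.Ioc_subset_Icc_self Set.Ioc_subset_Icc_self))
  have := MeasureTheory.integral_integral_swap hint
  simp only [intervalIntegral.integral_of_le hle]
  exact this

lemma int_cubic (a b c d : ℝ) :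
    (∫ t in (-1 : ℝ)..1, (a + b * t + c * t ^ 2 + d * t ^ 3)) = 2 * a + (2 / 3) * c := by
  have hder : ∀ t ∈ Set.uIcc (-1 : ℝ) 1,
      HasDerivAt (fun t => a * t + b / 2 * t ^ 2 + c / 3 * t ^ 3 + d / 4 * t ^ 4)
        (a + b * t + c * t ^ 2 + d * t ^ 3) t := by
    intro t _
    have h1 : HasDerivAt (fun t : ℝ => a * t) a t := by
      simpa using (hasDerivAt_id t).const_mul a
    have h2 : HasDerivAt (fun t : ℝ => b / 2 * t ^ 2) (b * t) t := by
      have := (hasDerivAt_pow 2 t).const_mul (b / 2)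
      refine this.congr_deriv ?_; push_cast; ring
    have h3 : HasDerivAt (fun t : ℝ => c / 3 * t ^ 3) (c * t ^ 2) t := by
      have := (hasDerivAt_pow 3 t).const_mul (c / 3)
      refine this.congr_deriv ?_; push_cast; ring
    have h4 : HasDerivAt (fun t : ℝ => d / 4 * t ^ 4) (d * t ^ 3) t := by
      have := (hasDerivAt_pow 4 t).const_mul (d / 4)
      refine this.congr_deriv ?_; push_cast; ring
    exact ((h1.add h2).add h3).add h4
  rw [intervalIntegral.integral_eq_sub_of_hasDerivAt hder
    (Continuous.intervalIntegrable (by fun_prop) _ _)]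
  ring

lemma deriv_cubic (a b c d x : ℝ) :
    deriv (fun t => a + b * t + c * t ^ 2 + d * t ^ 3) x = b + 2 * c * x + 3 * d * x ^ 2 := by
  have h1 : HasDerivAt (fun t : ℝ => a + b * t + c * t ^ 2 + d * t ^ 3)
      (b + 2 * c * x + 3 * d * x ^ 2) x := by
    have h0 : HasDerivAt (fun _ : ℝ => a) 0 x := hasDerivAt_const x a
    have h1 : HasDerivAt (fun t : ℝ => b * t) b x := by
      simpa using (hasDerivAt_id x).const_mul b
    have h2 : HasDerivAt (fun t : ℝ => c * t ^ 2) (2 * c * x) x := by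
      have := (hasDerivAt_pow 2 x).const_mul c
      refine this.congr_deriv ?_; push_cast; ring
    have h3 : HasDerivAt (fun t : ℝ => d * t ^ 3) (3 * d * x ^ 2) x := by
      have := (hasDerivAt_pow 3 x).const_mul d
      refine this.congr_deriv ?_; push_cast; ring
    have := ((h0.add h1).add h2).add h3
    refine this.congr_deriv ?_; ring
  exact h1.deriv

lemma pd_formula (g : ℝ → ℝ) (a b c d : ℝ) (h : ∀ t, g t = a + b * t + c * t ^ 2 + d * t ^ 3)
    (x : ℝ) : deriv g x = b + 2 * c * x + 3 * d * x ^ 2 := by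
  rw [show g = fun t => a + b * t + c * t ^ 2 + d * t ^ 3 from funext h, deriv_cubic]

lemma double_congr {f g : ℝ → ℝ → ℝ}
    (h : ∀ x ∈ Set.Icc (-1 : ℝ) 1, ∀ y ∈ Set.Icc (-1 : ℝ) 1, f x y = g x y) :
    (∫ x in (-1 : ℝ)..1, ∫ y in (-1 : ℝ)..1, f x y)
      = ∫ x in (-1 : ℝ)..1, ∫ y in (-1 : ℝ)..1, g x y := by
  apply intervalIntegral.integral_congr
  intro x hx
  rw [uIcc_eq] at hx
  apply intervalIntegral.integral_congr
  intro y hy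
  rw [uIcc_eq] at hy
  exact h x hx y hy

lemma semiH2_val (c3 c4 c5 c6 c7 : ℝ) :
    (∫ x in (-1 : ℝ)..1, ∫ y in (-1 : ℝ)..1,
      ((2 * c3 + 6 * c6 * x) ^ 2 + c4 ^ 2 + c4 ^ 2 + (2 * c5 + 6 * c7 * y) ^ 2))
    = 16 * c3 ^ 2 + 8 * c4 ^ 2 + 16 * c5 ^ 2 + 48 * c6 ^ 2 + 48 * c7 ^ 2 := by
  have hin : ∀ x : ℝ, (∫ y in (-1 : ℝ)..1,
      ((2 * c3 + 6 * c6 * x) ^ 2 + c4 ^ 2 + c4 ^ 2 + (2 * c5 + 6 * c7 * y) ^ 2))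
      = (8 * c3 ^ 2 + 4 * c4 ^ 2 + 8 * c5 ^ 2 + 24 * c7 ^ 2) + 48 * c3 * c6 * x
        + 72 * c6 ^ 2 * x ^ 2 := by
    intro x
    have h := int_cubic ((2 * c3 + 6 * c6 * x) ^ 2 + 2 * c4 ^ 2 + 4 * c5 ^ 2) (24 * c5 * c7)
      (36 * c7 ^ 2) 0
    have h2 : (∫ y in (-1 : ℝ)..1,
        ((2 * c3 + 6 * c6 * x) ^ 2 + c4 ^ 2 + c4 ^ 2 + (2 * c5 + 6 * c7 * y) ^ 2))
        = ∫ y in (-1 : ℝ)..1, (((2 * c3 + 6 * c6 * x) ^ 2 + 2 * c4 ^ 2 + 4 * c5 ^ 2)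
          + (24 * c5 * c7) * y + (36 * c7 ^ 2) * y ^ 2 + 0 * y ^ 3) := by
      apply intervalIntegral.integral_congr
      intro y _
      ring
    rw [h2, h]
    ring
  have h3 : (∫ x in (-1 : ℝ)..1, ∫ y in (-1 : ℝ)..1,
      ((2 * c3 + 6 * c6 * x) ^ 2 + c4 ^ 2 + c4 ^ 2 + (2 * c5 + 6 * c7 * y) ^ 2))
      = ∫ x in (-1 : ℝ)..1, ((8 * c3 ^ 2 + 4 * c4 ^ 2 + 8 * c5 ^ 2 + 24 * c7 ^ 2)
        + (48 * c3 * c6) * x + (72 * c6 ^ 2) * x ^ 2 + 0 * x ^ 3) := by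
    apply intervalIntegral.integral_congr
    intro x _
    show (∫ y in (-1 : ℝ)..1,
        ((2 * c3 + 6 * c6 * x) ^ 2 + c4 ^ 2 + c4 ^ 2 + (2 * c5 + 6 * c7 * y) ^ 2)) = _
    rw [hin x]
    ring
  rw [h3, int_cubic]
  ring

lemma sliceX_intervalIntegrable {G : ℝ × ℝ → ℝ} {U : Set (ℝ × ℝ)}
    (hK : Set.Icc (-1 : ℝ) 1 ×ˢ Set.Icc (-1 : ℝ) 1 ⊆ U) (hG : ContinuousOn G U) {y : ℝ}
    (hy : y ∈ Set.Icc (-1 : ℝ) 1) : IntervalIntegrable (fun s => G (s, y)) volume (-1 : ℝ) 1 := by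
  apply ContinuousOn.intervalIntegrable
  rw [uIcc_eq]
  exact hG.comp ((continuous_id.prodMk continuous_const).continuousOn)
    (fun s hs => hK ⟨hs, hy⟩)

lemma sliceY_intervalIntegrable {G : ℝ × ℝ → ℝ} {U : Set (ℝ × ℝ)}
    (hK : Set.Icc (-1 : ℝ) 1 ×ˢ Set.Icc (-1 : ℝ) 1 ⊆ U) (hG : ContinuousOn G U) {x : ℝ}
    (hx : x ∈ Set.Icc (-1 : ℝ) 1) : IntervalIntegrable (fun t => G (x, t)) volume (-1 : ℝ) 1 := by
  apply ContinuousOn.intervalIntegrable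
  rw [uIcc_eq]
  exact hG.comp ((continuous_const.prodMk continuous_id).continuousOn)
    (fun t ht => hK ⟨hx, ht⟩)

lemma boundA {A2 Q : ℝ × ℝ → ℝ} {U : Set (ℝ × ℝ)} (hU : IsOpen U)
    (hK : Set.Icc (-1 : ℝ) 1 ×ˢ Set.Icc (-1 : ℝ) 1 ⊆ U)
    (hA2 : ContDiffOn ℝ 1 A2 U) (hQ : ContinuousOn Q U)
    (hder : ∀ p ∈ U, Dx A2 p = Q p) :
    |(∫ x in (-1 : ℝ)..1, ∫ y in (-1 : ℝ)..1, A2 (x, y))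
        - 2 * (∫ t in (-1 : ℝ)..1, A2 (1, t))|
      ≤ 4 * Real.sqrt (∫ x in (-1 : ℝ)..1, ∫ y in (-1 : ℝ)..1, (Q (x, y)) ^ 2) := by
  have hle : (-1 : ℝ) ≤ 1 := by norm_num
  have h1m : (1 : ℝ) ∈ Set.Icc (-1 : ℝ) 1 := by norm_num
  set J := ∫ x in (-1 : ℝ)..1, ∫ y in (-1 : ℝ)..1, (Q (x, y)) ^ 2 with hJdef
  have hA2c : ContinuousOn A2 U := hA2.continuousOn
  have hQsq : ContinuousOn (fun p => (Q p) ^ 2) U := hQ.pow 2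
  have hJ0 : 0 ≤ J := by
    apply intervalIntegral.integral_nonneg hle
    intro x _
    exact intervalIntegral.integral_nonneg hle (fun y _ => sq_nonneg _)
  set G : ℝ → ℝ := fun y => ∫ s in (-1 : ℝ)..1, (Q (s, y)) ^ 2 with hGdef
  have hGcont : ContinuousOn G (Set.Icc (-1 : ℝ) 1) := contOn_param' hU hK hQsq
  set T := ∫ y in (-1 : ℝ)..1, G y with hTdef
  have hT : T = J := swap_sq hK hQ
  -- the inner-difference function and its continuity
  set Ut : Set (ℝ × ℝ) := U ∩ {p : ℝ × ℝ | (1, p.2) ∈ U} with hUtdef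
  have hUt : IsOpen Ut := hU.inter (hU.preimage (by fun_prop))
  have hKUt : Set.Icc (-1 : ℝ) 1 ×ˢ Set.Icc (-1 : ℝ) 1 ⊆ Ut := by
    intro p hp
    exact ⟨hK hp, hK ⟨h1m, hp.2⟩⟩
  have hWc : ContinuousOn (fun p : ℝ × ℝ => A2 p - A2 (1, p.2)) Ut := by
    apply ContinuousOn.sub (hA2c.mono Set.inter_subset_left)
    apply hA2c.comp (Continuous.continuousOn (by fun_prop))
    intro p hp
    exact hp.2
  have hinnerCont : ContinuousOn (fun x => ∫ y in (-1 : ℝ)..1, (A2 (x, y) - A2 (1, y)))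
      (Set.Icc (-1 : ℝ) 1) := contOn_param hUt hKUt hWc
  apply eps_bound hJ0
  intro ε hε
  -- pointwise bound
  have hptw : ∀ x ∈ Set.Icc (-1 : ℝ) 1, ∀ y ∈ Set.Icc (-1 : ℝ) 1,
      |A2 (x, y) - A2 (1, y)| ≤ ε + 1 / (2 * ε) * G y := by
    intro x hx y hy
    have huIcc : Set.uIcc x 1 ⊆ Set.Icc (-1 : ℝ) 1 := by
      rw [← uIcc_eq]
      exact Set.uIcc_subset_uIcc (by rw [uIcc_eq]; exact hx) (by rw [uIcc_eq]; exact h1m)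
    have hQy : IntervalIntegrable (fun s => Q (s, y)) volume (-1 : ℝ) 1 :=
      sliceX_intervalIntegrable hK hQ hy
    have hQya : IntervalIntegrable (fun s => |Q (s, y)|) volume (-1 : ℝ) 1 := hQy.abs
    have hFTC : ∫ s in x..1, Q (s, y) = A2 (1, y) - A2 (x, y) := by
      refine intervalIntegral.integral_eq_sub_of_hasDerivAt (f := fun t => A2 (t, y)) ?_ ?_
      · intro s hs
        have hmem : (s, y) ∈ U := hK ⟨huIcc hs, hy⟩
        have hdiff : DifferentiableAt ℝ A2 (s, y) :=
          (hA2.differentiableOn one_ne_zero (s, y) hmem).differentiableAt (hU.mem_nhds hmem)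
        have h := hasDerivAt_sliceX hdiff
        rwa [hder (s, y) hmem] at h
      · exact hQy.mono_set (by rw [uIcc_eq]; exact huIcc)
    have h1 : |A2 (x, y) - A2 (1, y)| = |∫ s in x..1, Q (s, y)| := by
      rw [hFTC, abs_sub_comm]
    rw [h1]
    have h2 : |∫ s in x..1, Q (s, y)| ≤ ∫ s in x..1, |Q (s, y)| :=
      intervalIntegral.abs_integral_le_integral_abs hx.2
    have h3 : (∫ s in x..1, |Q (s, y)|) ≤ ∫ s in (-1 : ℝ)..1, |Q (s, y)| := by
      apply intervalIntegral.integral_mono_interval hx.1 hx.2 le_rfl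
      · exact MeasureTheory.ae_of_all _ (fun s => abs_nonneg _)
      · exact hQya
    have h4 : (∫ s in (-1 : ℝ)..1, |Q (s, y)|)
        ≤ ∫ s in (-1 : ℝ)..1, (ε / 2 + 1 / (2 * ε) * (Q (s, y)) ^ 2) := by
      apply intervalIntegral.integral_mono_on hle hQya
      · exact intervalIntegrable_const.add
          ((sliceX_intervalIntegrable hK hQsq hy).const_mul _)
      · intro s _
        have h2ε : (0 : ℝ) < 2 * ε := by linarith
        have hkey : |Q (s, y)| ≤ (ε ^ 2 + (Q (s, y)) ^ 2) / (2 * ε) := by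
          rw [le_div_iff₀ h2ε]
          nlinarith [sq_nonneg (ε - |Q (s, y)|), sq_abs (Q (s, y))]
        have heq2 : (ε ^ 2 + (Q (s, y)) ^ 2) / (2 * ε) = ε / 2 + 1 / (2 * ε) * (Q (s, y)) ^ 2 := by
          field_simp
        linarith
    have h7 : (∫ s in (-1 : ℝ)..1, (ε / 2 + 1 / (2 * ε) * (Q (s, y)) ^ 2))
        = ε + 1 / (2 * ε) * G y := by
      rw [intervalIntegral.integral_add intervalIntegrable_const
        ((sliceX_intervalIntegrable hK hQsq hy).const_mul _),
        intervalIntegral.integral_const, intervalIntegral.integral_const_mul]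
      simp only [smul_eq_mul, hGdef]
      ring
    linarith
  -- inner bound
  have hinner : ∀ x ∈ Set.Icc (-1 : ℝ) 1,
      |∫ y in (-1 : ℝ)..1, (A2 (x, y) - A2 (1, y))| ≤ 2 * ε + 1 / (2 * ε) * T := by
    intro x hx
    have hdiffCont : ContinuousOn (fun y => A2 (x, y) - A2 (1, y)) (Set.Icc (-1 : ℝ) 1) := by
      apply ContinuousOn.sub
      · exact (hA2c.comp (Continuous.continuousOn (by fun_prop)) (fun t ht => hK ⟨hx, ht⟩))
      · exact (hA2c.comp (Continuous.continuousOn (by fun_prop)) (fun t ht => hK ⟨h1m, ht⟩))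
    have hdint : IntervalIntegrable (fun y => A2 (x, y) - A2 (1, y)) volume (-1 : ℝ) 1 := by
      apply ContinuousOn.intervalIntegrable; rw [uIcc_eq]; exact hdiffCont
    have habs : |∫ y in (-1 : ℝ)..1, (A2 (x, y) - A2 (1, y))|
        ≤ ∫ y in (-1 : ℝ)..1, |A2 (x, y) - A2 (1, y)| :=
      intervalIntegral.abs_integral_le_integral_abs hle
    have hmono : (∫ y in (-1 : ℝ)..1, |A2 (x, y) - A2 (1, y)|)
        ≤ ∫ y in (-1 : ℝ)..1, (ε + 1 / (2 * ε) * G y) := by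
      apply intervalIntegral.integral_mono_on hle hdint.abs
      · apply ContinuousOn.intervalIntegrable
        rw [uIcc_eq]
        exact continuousOn_const.add (continuousOn_const.mul hGcont)
      · exact fun y hy => hptw x hx y hy
    have hval : (∫ y in (-1 : ℝ)..1, (ε + 1 / (2 * ε) * G y)) = 2 * ε + 1 / (2 * ε) * T := by
      have hGint : IntervalIntegrable G volume (-1 : ℝ) 1 := by
        apply ContinuousOn.intervalIntegrable; rw [uIcc_eq]; exact hGcont
      rw [intervalIntegral.integral_add intervalIntegrable_const (hGint.const_mul _),
        intervalIntegral.integral_const, intervalIntegral.integral_const_mul]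
      rw [← hTdef]
      simp only [smul_eq_mul]
      ring
    linarith
  -- outer bound
  set c := ∫ t in (-1 : ℝ)..1, A2 (1, t) with hcdef
  have hparamA : IntervalIntegrable (fun x => ∫ y in (-1 : ℝ)..1, A2 (x, y)) volume (-1 : ℝ) 1 := by
    apply ContinuousOn.intervalIntegrable; rw [uIcc_eq]; exact contOn_param hU hK hA2c
  have hsplit : (∫ x in (-1 : ℝ)..1, ∫ y in (-1 : ℝ)..1, A2 (x, y)) - 2 * c
      = ∫ x in (-1 : ℝ)..1, ∫ y in (-1 : ℝ)..1, (A2 (x, y) - A2 (1, y)) := by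
    have hstep : ∀ x ∈ Set.uIcc (-1 : ℝ) 1,
        (∫ y in (-1 : ℝ)..1, (A2 (x, y) - A2 (1, y)))
          = (∫ y in (-1 : ℝ)..1, A2 (x, y)) - c := by
      intro x hx
      rw [uIcc_eq] at hx
      rw [intervalIntegral.integral_sub (sliceY_intervalIntegrable hK hA2c hx)
        (sliceY_intervalIntegrable hK hA2c h1m)]
    rw [intervalIntegral.integral_congr (g := fun x => (∫ y in (-1 : ℝ)..1, A2 (x, y)) - c)
      (fun x hx => hstep x hx)]
    rw [intervalIntegral.integral_sub hparamA intervalIntegrable_const,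
      intervalIntegral.integral_const]
    simp only [smul_eq_mul]
    ring
  rw [hsplit]
  have hiint : IntervalIntegrable (fun x => ∫ y in (-1 : ℝ)..1, (A2 (x, y) - A2 (1, y)))
      volume (-1 : ℝ) 1 := by
    apply ContinuousOn.intervalIntegrable; rw [uIcc_eq]; exact hinnerCont
  have habs2 : |∫ x in (-1 : ℝ)..1, ∫ y in (-1 : ℝ)..1, (A2 (x, y) - A2 (1, y))|
      ≤ ∫ x in (-1 : ℝ)..1, |∫ y in (-1 : ℝ)..1, (A2 (x, y) - A2 (1, y))| :=
    intervalIntegral.abs_integral_le_integral_abs hle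
  have hmono2 : (∫ x in (-1 : ℝ)..1, |∫ y in (-1 : ℝ)..1, (A2 (x, y) - A2 (1, y))|)
      ≤ ∫ x in (-1 : ℝ)..1, (2 * ε + 1 / (2 * ε) * T) := by
    apply intervalIntegral.integral_mono_on hle hiint.abs intervalIntegrable_const
    exact fun x hx => hinner x hx
  have hconst : (∫ x in (-1 : ℝ)..1, (2 * ε + 1 / (2 * ε) * T)) = 4 * ε + J / ε := by
    rw [intervalIntegral.integral_const, ← hT]
    simp only [smul_eq_mul]
    field_simp
    ring
  linarith

lemma boundD {D2 Q : ℝ × ℝ → ℝ} {U : Set (ℝ × ℝ)} (hU : IsOpen U)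
    (hK : Set.Icc (-1 : ℝ) 1 ×ˢ Set.Icc (-1 : ℝ) 1 ⊆ U)
    (hD2 : ContDiffOn ℝ 1 D2 U) (hQ : ContinuousOn Q U)
    (hder : ∀ p ∈ U, Dy D2 p = Q p) :
    |(∫ x in (-1 : ℝ)..1, ∫ y in (-1 : ℝ)..1, D2 (x, y))
        - 2 * (∫ t in (-1 : ℝ)..1, D2 (t, -1))|
      ≤ 4 * Real.sqrt (∫ x in (-1 : ℝ)..1, ∫ y in (-1 : ℝ)..1, (Q (x, y)) ^ 2) := by
  have hle : (-1 : ℝ) ≤ 1 := by norm_num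
  have hm1 : (-1 : ℝ) ∈ Set.Icc (-1 : ℝ) 1 := by norm_num
  set J := ∫ x in (-1 : ℝ)..1, ∫ y in (-1 : ℝ)..1, (Q (x, y)) ^ 2 with hJdef
  have hD2c : ContinuousOn D2 U := hD2.continuousOn
  have hQsq : ContinuousOn (fun p => (Q p) ^ 2) U := hQ.pow 2
  have hJ0 : 0 ≤ J := by
    apply intervalIntegral.integral_nonneg hle
    intro x _
    exact intervalIntegral.integral_nonneg hle (fun y _ => sq_nonneg _)
  set H : ℝ → ℝ := fun x => ∫ t in (-1 : ℝ)..1, (Q (x, t)) ^ 2 with hHdef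
  have hHcont : ContinuousOn H (Set.Icc (-1 : ℝ) 1) := contOn_param hU hK hQsq
  have hHJ : (∫ x in (-1 : ℝ)..1, H x) = J := rfl
  -- the inner-difference function and its continuity
  set Ut : Set (ℝ × ℝ) := U ∩ {p : ℝ × ℝ | (p.1, (-1 : ℝ)) ∈ U} with hUtdef
  have hUt : IsOpen Ut := hU.inter (hU.preimage (by fun_prop))
  have hKUt : Set.Icc (-1 : ℝ) 1 ×ˢ Set.Icc (-1 : ℝ) 1 ⊆ Ut := by
    intro p hp
    exact ⟨hK hp, hK ⟨hp.1, hm1⟩⟩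
  have hWc : ContinuousOn (fun p : ℝ × ℝ => D2 p - D2 (p.1, -1)) Ut := by
    apply ContinuousOn.sub (hD2c.mono Set.inter_subset_left)
    apply hD2c.comp (Continuous.continuousOn (by fun_prop))
    intro p hp
    exact hp.2
  have hinnerCont : ContinuousOn (fun x => ∫ y in (-1 : ℝ)..1, (D2 (x, y) - D2 (x, -1)))
      (Set.Icc (-1 : ℝ) 1) := contOn_param hUt hKUt hWc
  apply eps_bound hJ0
  intro ε hε
  -- pointwise bound
  have hptw : ∀ x ∈ Set.Icc (-1 : ℝ) 1, ∀ y ∈ Set.Icc (-1 : ℝ) 1,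
      |D2 (x, y) - D2 (x, -1)| ≤ ε + 1 / (2 * ε) * H x := by
    intro x hx y hy
    have huIcc : Set.uIcc (-1 : ℝ) y ⊆ Set.Icc (-1 : ℝ) 1 := by
      rw [← uIcc_eq]
      exact Set.uIcc_subset_uIcc (by rw [uIcc_eq]; exact hm1) (by rw [uIcc_eq]; exact hy)
    have hQx : IntervalIntegrable (fun t => Q (x, t)) volume (-1 : ℝ) 1 :=
      sliceY_intervalIntegrable hK hQ hx
    have hQxa : IntervalIntegrable (fun t => |Q (x, t)|) volume (-1 : ℝ) 1 := hQx.abs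
    have hFTC : ∫ s in (-1 : ℝ)..y, Q (x, s) = D2 (x, y) - D2 (x, -1) := by
      refine intervalIntegral.integral_eq_sub_of_hasDerivAt (f := fun t => D2 (x, t)) ?_ ?_
      · intro s hs
        have hmem : (x, s) ∈ U := hK ⟨hx, huIcc hs⟩
        have hdiff : DifferentiableAt ℝ D2 (x, s) :=
          (hD2.differentiableOn one_ne_zero (x, s) hmem).differentiableAt (hU.mem_nhds hmem)
        have h := hasDerivAt_sliceY hdiff
        rwa [hder (x, s) hmem] at h
      · exact hQx.mono_set (by rw [uIcc_eq]; exact huIcc)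
    have h1 : |D2 (x, y) - D2 (x, -1)| = |∫ s in (-1 : ℝ)..y, Q (x, s)| := by
      rw [hFTC]
    rw [h1]
    have h2 : |∫ s in (-1 : ℝ)..y, Q (x, s)| ≤ ∫ s in (-1 : ℝ)..y, |Q (x, s)| :=
      intervalIntegral.abs_integral_le_integral_abs hy.1
    have h3 : (∫ s in (-1 : ℝ)..y, |Q (x, s)|) ≤ ∫ s in (-1 : ℝ)..1, |Q (x, s)| := by
      apply intervalIntegral.integral_mono_interval le_rfl hy.1 hy.2
      · exact MeasureTheory.ae_of_all _ (fun s => abs_nonneg _)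
      · exact hQxa
    have h4 : (∫ s in (-1 : ℝ)..1, |Q (x, s)|)
        ≤ ∫ s in (-1 : ℝ)..1, (ε / 2 + 1 / (2 * ε) * (Q (x, s)) ^ 2) := by
      apply intervalIntegral.integral_mono_on hle hQxa
      · exact intervalIntegrable_const.add
          ((sliceY_intervalIntegrable hK hQsq hx).const_mul _)
      · intro s _
        have h2ε : (0 : ℝ) < 2 * ε := by linarith
        have hkey : |Q (x, s)| ≤ (ε ^ 2 + (Q (x, s)) ^ 2) / (2 * ε) := by
          rw [le_div_iff₀ h2ε]
          nlinarith [sq_nonneg (ε - |Q (x, s)|), sq_abs (Q (x, s))]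
        have heq2 : (ε ^ 2 + (Q (x, s)) ^ 2) / (2 * ε) = ε / 2 + 1 / (2 * ε) * (Q (x, s)) ^ 2 := by
          field_simp
        linarith
    have h7 : (∫ s in (-1 : ℝ)..1, (ε / 2 + 1 / (2 * ε) * (Q (x, s)) ^ 2))
        = ε + 1 / (2 * ε) * H x := by
      rw [intervalIntegral.integral_add intervalIntegrable_const
        ((sliceY_intervalIntegrable hK hQsq hx).const_mul _),
        intervalIntegral.integral_const, intervalIntegral.integral_const_mul]
      simp only [smul_eq_mul, hHdef]
      ring
    linarith
  -- inner bound
  have hinner : ∀ x ∈ Set.Icc (-1 : ℝ) 1,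
      |∫ y in (-1 : ℝ)..1, (D2 (x, y) - D2 (x, -1))| ≤ 2 * ε + 1 / ε * H x := by
    intro x hx
    have hdiffCont : ContinuousOn (fun y => D2 (x, y) - D2 (x, -1)) (Set.Icc (-1 : ℝ) 1) := by
      apply ContinuousOn.sub
      · exact (hD2c.comp (Continuous.continuousOn (by fun_prop)) (fun t ht => hK ⟨hx, ht⟩))
      · exact continuousOn_const
    have hdint : IntervalIntegrable (fun y => D2 (x, y) - D2 (x, -1)) volume (-1 : ℝ) 1 := by
      apply ContinuousOn.intervalIntegrable; rw [uIcc_eq]; exact hdiffCont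
    have habs : |∫ y in (-1 : ℝ)..1, (D2 (x, y) - D2 (x, -1))|
        ≤ ∫ y in (-1 : ℝ)..1, |D2 (x, y) - D2 (x, -1)| :=
      intervalIntegral.abs_integral_le_integral_abs hle
    have hmono : (∫ y in (-1 : ℝ)..1, |D2 (x, y) - D2 (x, -1)|)
        ≤ ∫ y in (-1 : ℝ)..1, (ε + 1 / (2 * ε) * H x) := by
      apply intervalIntegral.integral_mono_on hle hdint.abs intervalIntegrable_const
      exact fun y hy => hptw x hx y hy
    have hval : (∫ y in (-1 : ℝ)..1, (ε + 1 / (2 * ε) * H x)) = 2 * ε + 1 / ε * H x := by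
      rw [intervalIntegral.integral_const]
      simp only [smul_eq_mul]
      field_simp
      ring
    linarith
  -- outer bound
  set c := ∫ t in (-1 : ℝ)..1, D2 (t, -1) with hcdef
  have hc_cont : ContinuousOn (fun x => D2 (x, -1)) (Set.Icc (-1 : ℝ) 1) :=
    hD2c.comp (Continuous.continuousOn (by fun_prop)) (fun t ht => hK ⟨ht, hm1⟩)
  have hc_int : IntervalIntegrable (fun x => D2 (x, -1)) volume (-1 : ℝ) 1 := by
    apply ContinuousOn.intervalIntegrable; rw [uIcc_eq]; exact hc_cont
  have hparamD : IntervalIntegrable (fun x => ∫ y in (-1 : ℝ)..1, D2 (x, y)) volume (-1 : ℝ) 1 := by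
    apply ContinuousOn.intervalIntegrable; rw [uIcc_eq]; exact contOn_param hU hK hD2c
  have hsplit : (∫ x in (-1 : ℝ)..1, ∫ y in (-1 : ℝ)..1, D2 (x, y)) - 2 * c
      = ∫ x in (-1 : ℝ)..1, ∫ y in (-1 : ℝ)..1, (D2 (x, y) - D2 (x, -1)) := by
    have hstep : ∀ x ∈ Set.uIcc (-1 : ℝ) 1,
        (∫ y in (-1 : ℝ)..1, (D2 (x, y) - D2 (x, -1)))
          = (∫ y in (-1 : ℝ)..1, D2 (x, y)) - 2 * D2 (x, -1) := by
      intro x hx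
      rw [uIcc_eq] at hx
      rw [intervalIntegral.integral_sub (sliceY_intervalIntegrable hK hD2c hx)
        intervalIntegrable_const, intervalIntegral.integral_const]
      simp only [smul_eq_mul]
      ring
    rw [intervalIntegral.integral_congr
      (g := fun x => (∫ y in (-1 : ℝ)..1, D2 (x, y)) - 2 * D2 (x, -1))
      (fun x hx => hstep x hx)]
    rw [intervalIntegral.integral_sub hparamD (hc_int.const_mul 2),
      intervalIntegral.integral_const_mul]
  rw [hsplit]
  have hiint : IntervalIntegrable (fun x => ∫ y in (-1 : ℝ)..1, (D2 (x, y) - D2 (x, -1)))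
      volume (-1 : ℝ) 1 := by
    apply ContinuousOn.intervalIntegrable; rw [uIcc_eq]; exact hinnerCont
  have habs2 : |∫ x in (-1 : ℝ)..1, ∫ y in (-1 : ℝ)..1, (D2 (x, y) - D2 (x, -1))|
      ≤ ∫ x in (-1 : ℝ)..1, |∫ y in (-1 : ℝ)..1, (D2 (x, y) - D2 (x, -1))| :=
    intervalIntegral.abs_integral_le_integral_abs hle
  have hbint : IntervalIntegrable (fun x => 2 * ε + 1 / ε * H x) volume (-1 : ℝ) 1 := by
    apply ContinuousOn.intervalIntegrable
    rw [uIcc_eq]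
    exact continuousOn_const.add (continuousOn_const.mul hHcont)
  have hmono2 : (∫ x in (-1 : ℝ)..1, |∫ y in (-1 : ℝ)..1, (D2 (x, y) - D2 (x, -1))|)
      ≤ ∫ x in (-1 : ℝ)..1, (2 * ε + 1 / ε * H x) := by
    apply intervalIntegral.integral_mono_on hle hiint.abs hbint
    exact fun x hx => hinner x hx
  have hHint : IntervalIntegrable H volume (-1 : ℝ) 1 := by
    apply ContinuousOn.intervalIntegrable; rw [uIcc_eq]; exact hHcont
  have hconst : (∫ x in (-1 : ℝ)..1, (2 * ε + 1 / ε * H x)) = 4 * ε + J / ε := by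
    rw [intervalIntegral.integral_add intervalIntegrable_const (hHint.const_mul _),
      intervalIntegral.integral_const, intervalIntegral.integral_const_mul, hHJ]
    simp only [smul_eq_mul]
    ring
  linarith

end M

/-- Continuity bound for the functional `B₂` on the reference square. -/
theorem stmt_10 :
    ∃ C > (0:ℝ), ∀ u v : ℝ → ℝ → ℝ, C4Near u (-1) 1 (-1) 1 → MorleyShape2 v →
      |B2 u v| ≤ C * semiH4R u (-1) 1 (-1) 1 * semiH2R v (-1) 1 (-1) 1 := by
  refine ⟨16, by norm_num, ?_⟩
  intro u v hu hmv
  obtain ⟨U, hUo, hKU, hF⟩ := hu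
  obtain ⟨c0, c1, c2, c3, c4, c5, c6, c7, hv⟩ := hmv
  have hle : (-1 : ℝ) ≤ 1 := by norm_num
  have h1m : (1 : ℝ) ∈ Set.Icc (-1 : ℝ) 1 := by norm_num
  have hm1 : (-1 : ℝ) ∈ Set.Icc (-1 : ℝ) 1 := by norm_num
  set F : ℝ × ℝ → ℝ := fun p => u p.1 p.2 with hFdef
  have h0 : ∀ p ∈ U, u p.1 p.2 = F p := fun p _ => rfl
  -- derivative chains
  have hy1 := M.stepy hUo h0 hF (show (3 : WithTop ℕ∞) + 1 ≤ 4 by norm_num)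
  have hy2 := M.stepy hUo hy1.1 hy1.2 (show (2 : WithTop ℕ∞) + 1 ≤ 3 by norm_num)
  have hy3 := M.stepy hUo hy2.1 hy2.2 (show (1 : WithTop ℕ∞) + 1 ≤ 2 by norm_num)
  have hy4 := M.stepy hUo hy3.1 hy3.2 (show (0 : WithTop ℕ∞) + 1 ≤ 1 by norm_num)
  have hA := M.stepx hUo hy2.1 hy2.2 (show (1 : WithTop ℕ∞) + 1 ≤ 2 by norm_num)
  have hQch := M.stepx hUo hA.1 hA.2 (show (0 : WithTop ℕ∞) + 1 ≤ 1 by norm_num)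
  have hxy := M.stepx hUo hy1.1 hy1.2 (show (2 : WithTop ℕ∞) + 1 ≤ 3 by norm_num)
  have hD := M.stepx hUo hxy.1 hxy.2 (show (1 : WithTop ℕ∞) + 1 ≤ 2 by norm_num)
  have ht2 := M.stepx hUo hD.1 hD.2 (show (0 : WithTop ℕ∞) + 1 ≤ 1 by norm_num)
  have hx1 := M.stepx hUo h0 hF (show (3 : WithTop ℕ∞) + 1 ≤ 4 by norm_num)
  have hx2 := M.stepx hUo hx1.1 hx1.2 (show (2 : WithTop ℕ∞) + 1 ≤ 3 by norm_num)
  have hx3 := M.stepx hUo hx2.1 hx2.2 (show (1 : WithTop ℕ∞) + 1 ≤ 2 by norm_num)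
  have hx4 := M.stepx hUo hx3.1 hx3.2 (show (0 : WithTop ℕ∞) + 1 ≤ 1 by norm_num)
  have ht4 := M.stepx hUo hy3.1 hy3.2 (show (0 : WithTop ℕ∞) + 1 ≤ 1 by norm_num)
  -- Clairaut identities
  have hC1 : ∀ q ∈ U, M.Dx (M.Dy (M.Dy F)) q = M.Dy (M.Dx (M.Dy F)) q :=
    fun q hq => M.clairaut hUo (hy1.2.of_le (by norm_num)) hq
  have hC2 : ∀ p ∈ U, M.Dx (M.Dy (M.Dx (M.Dy F))) p = M.Dy (M.Dx (M.Dx (M.Dy F))) p :=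
    fun p hp => M.clairaut hUo hxy.2 hp
  have hQD : ∀ p ∈ U, M.Dy (M.Dx (M.Dx (M.Dy F))) p = M.Dx (M.Dx (M.Dy (M.Dy F))) p := by
    intro p hp
    rw [← hC2 p hp]
    exact M.Dx_congr hUo (fun q hq => (hC1 q hq).symm) hp
  set A2w : ℝ × ℝ → ℝ := M.Dx (M.Dy (M.Dy F)) with hA2wdef
  set D2w : ℝ × ℝ → ℝ := M.Dx (M.Dx (M.Dy F)) with hD2wdef
  set Qw : ℝ × ℝ → ℝ := M.Dx A2w with hQwdef
  have hQc : ContinuousOn Qw U := hQch.2.continuousOn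
  -- the two key estimates
  have hXA := M.boundA hUo hKU hA.2 hQc (fun p _ => by rw [hQwdef])
  have hXD := M.boundD hUo hKU hD.2 hQc hQD
  set J := ∫ x in (-1 : ℝ)..1, ∫ y in (-1 : ℝ)..1, (Qw (x, y)) ^ 2 with hJdef
  have hJ0 : 0 ≤ J := intervalIntegral.integral_nonneg hle
    (fun x _ => intervalIntegral.integral_nonneg hle (fun y _ => sq_nonneg _))
  -- the H⁴ seminorm dominates √J
  set W : ℝ × ℝ → ℝ := fun p => (M.Dx (M.Dx (M.Dx (M.Dx F))) p) ^ 2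
      + 4 * (M.Dx (M.Dx (M.Dx (M.Dy F))) p) ^ 2 + 6 * (Qw p) ^ 2
      + 4 * (M.Dx (M.Dy (M.Dy (M.Dy F))) p) ^ 2 + (M.Dy (M.Dy (M.Dy (M.Dy F))) p) ^ 2
    with hWdef
  have hWcont : ContinuousOn W U := by
    apply ContinuousOn.add
    apply ContinuousOn.add
    apply ContinuousOn.add
    apply ContinuousOn.add
    · exact (hx4.2.continuousOn).pow 2
    · exact continuousOn_const.mul ((ht2.2.continuousOn).pow 2)
    · exact continuousOn_const.mul ((hQch.2.continuousOn).pow 2)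
    · exact continuousOn_const.mul ((ht4.2.continuousOn).pow 2)
    · exact (hy4.2.continuousOn).pow 2
  have hS4 : semiH4R u (-1) 1 (-1) 1
      = Real.sqrt (∫ x in (-1 : ℝ)..1, ∫ y in (-1 : ℝ)..1, W (x, y)) := by
    rw [semiH4R]
    congr 1
    apply M.double_congr
    intro x hx y hy
    have hmem : ((x, y) : ℝ × ℝ) ∈ U := hKU ⟨hx, hy⟩
    have e1 : pdx (pdx (pdx (pdx u))) x y = M.Dx (M.Dx (M.Dx (M.Dx F))) (x, y) :=
      hx4.1 (x, y) hmem
    have e2 : pdx (pdx (pdx (pdy u))) x y = M.Dx (M.Dx (M.Dx (M.Dy F))) (x, y) :=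
      ht2.1 (x, y) hmem
    have e3 : pdx (pdx (pdy (pdy u))) x y = Qw (x, y) := hQch.1 (x, y) hmem
    have e4 : pdx (pdy (pdy (pdy u))) x y = M.Dx (M.Dy (M.Dy (M.Dy F))) (x, y) :=
      ht4.1 (x, y) hmem
    have e5 : pdy (pdy (pdy (pdy u))) x y = M.Dy (M.Dy (M.Dy (M.Dy F))) (x, y) :=
      hy4.1 (x, y) hmem
    rw [e1, e2, e3, e4, e5]
  have hQsqc : ContinuousOn (fun p : ℝ × ℝ => 6 * (Qw p) ^ 2) U :=
    continuousOn_const.mul ((hQch.2.continuousOn).pow 2)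
  have hinner6 : ∀ x ∈ Set.Icc (-1 : ℝ) 1,
      (∫ y in (-1 : ℝ)..1, 6 * (Qw (x, y)) ^ 2) ≤ ∫ y in (-1 : ℝ)..1, W (x, y) := by
    intro x hx
    apply intervalIntegral.integral_mono_on hle
      (M.sliceY_intervalIntegrable hKU hQsqc hx) (M.sliceY_intervalIntegrable hKU hWcont hx)
    intro y hy
    simp only [hWdef]
    nlinarith [sq_nonneg (M.Dx (M.Dx (M.Dx (M.Dx F))) (x, y)),
      sq_nonneg (M.Dx (M.Dx (M.Dx (M.Dy F))) (x, y)),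
      sq_nonneg (M.Dx (M.Dy (M.Dy (M.Dy F))) (x, y)),
      sq_nonneg (M.Dy (M.Dy (M.Dy (M.Dy F))) (x, y))]
  have h6J : 6 * J ≤ ∫ x in (-1 : ℝ)..1, ∫ y in (-1 : ℝ)..1, W (x, y) := by
    have hL : (∫ x in (-1 : ℝ)..1, ∫ y in (-1 : ℝ)..1, 6 * (Qw (x, y)) ^ 2) = 6 * J := by
      rw [intervalIntegral.integral_congr
        (g := fun x => 6 * ∫ y in (-1 : ℝ)..1, (Qw (x, y)) ^ 2)
        (fun x _ => intervalIntegral.integral_const_mul _ _),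
        intervalIntegral.integral_const_mul, hJdef]
    rw [← hL]
    apply intervalIntegral.integral_mono_on hle ?_ ?_ hinner6
    · apply ContinuousOn.intervalIntegrable
      rw [M.uIcc_eq]
      exact M.contOn_param hUo hKU hQsqc
    · apply ContinuousOn.intervalIntegrable
      rw [M.uIcc_eq]
      exact M.contOn_param hUo hKU hWcont
  have hsqrtJ : Real.sqrt J ≤ semiH4R u (-1) 1 (-1) 1 := by
    rw [hS4]
    exact Real.sqrt_le_sqrt (by linarith)
  -- derivatives of the polynomial v
  have hvx : ∀ x y : ℝ, pdx v x y = c1 + c4 * y + 2 * c3 * x + 3 * c6 * x ^ 2 := by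
    intro x y
    have h := M.pd_formula (fun t => v t y) (c0 + c2 * y + c5 * y ^ 2 + c7 * y ^ 3)
      (c1 + c4 * y) c3 c6 (fun t => by show v t y = _; rw [hv t y]; ring) x
    show deriv (fun t => v t y) x = _
    rw [h]
  have hvy : ∀ x y : ℝ, pdy v x y = c2 + c4 * x + 2 * c5 * y + 3 * c7 * y ^ 2 := by
    intro x y
    have h := M.pd_formula (fun t => v x t) (c0 + c1 * x + c3 * x ^ 2 + c6 * x ^ 3)
      (c2 + c4 * x) c5 c7 (fun t => by show v x t = _; rw [hv x t]; ring) y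
    show deriv (fun t => v x t) y = _
    rw [h]
  have hvxx : ∀ x y : ℝ, pdx (pdx v) x y = 2 * c3 + 6 * c6 * x := by
    intro x y
    have h := M.pd_formula (fun t => pdx v t y) (c1 + c4 * y) (2 * c3) (3 * c6) 0
      (fun t => by show pdx v t y = _; rw [hvx t y]; ring) x
    show deriv (fun t => pdx v t y) x = _
    rw [h]; ring
  have hvxy : ∀ x y : ℝ, pdx (pdy v) x y = c4 := by
    intro x y
    have h := M.pd_formula (fun t => pdy v t y) (c2 + 2 * c5 * y + 3 * c7 * y ^ 2) c4 0 0
      (fun t => by show pdy v t y = _; rw [hvy t y]; ring) x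
    show deriv (fun t => pdy v t y) x = _
    rw [h]; ring
  have hvyx : ∀ x y : ℝ, pdy (pdx v) x y = c4 := by
    intro x y
    have h := M.pd_formula (fun t => pdx v x t) (c1 + 2 * c3 * x + 3 * c6 * x ^ 2) c4 0 0
      (fun t => by show pdx v x t = _; rw [hvx x t]; ring) y
    show deriv (fun t => pdx v x t) y = _
    rw [h]; ring
  have hvyy : ∀ x y : ℝ, pdy (pdy v) x y = 2 * c5 + 6 * c7 * y := by
    intro x y
    have h := M.pd_formula (fun t => pdy v x t) (c2 + c4 * x) (2 * c5) (3 * c7) 0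
      (fun t => by show pdy v x t = _; rw [hvy x t]; ring) y
    show deriv (fun t => pdy v x t) y = _
    rw [h]; ring
  have hv3x : ∀ x y : ℝ, pdx (pdx (pdx v)) x y = 6 * c6 := by
    intro x y
    have h := M.pd_formula (fun t => pdx (pdx v) t y) (2 * c3) (6 * c6) 0 0
      (fun t => by show pdx (pdx v) t y = _; rw [hvxx t y]; ring) x
    show deriv (fun t => pdx (pdx v) t y) x = _
    rw [h]; ring
  have hv3y : ∀ x y : ℝ, pdy (pdy (pdy v)) x y = 6 * c7 := by
    intro x y
    have h := M.pd_formula (fun t => pdy (pdy v) x t) (2 * c5) (6 * c7) 0 0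
      (fun t => by show pdy (pdy v) x t = _; rw [hvyy x t]; ring) y
    show deriv (fun t => pdy (pdy v) x t) y = _
    rw [h]; ring
  -- value of the H² seminorm
  have hS2 : semiH2R v (-1) 1 (-1) 1
      = Real.sqrt (16 * c3 ^ 2 + 8 * c4 ^ 2 + 16 * c5 ^ 2 + 48 * c6 ^ 2 + 48 * c7 ^ 2) := by
    rw [semiH2R]
    congr 1
    rw [M.double_congr (g := fun x y => (2 * c3 + 6 * c6 * x) ^ 2 + c4 ^ 2 + c4 ^ 2
        + (2 * c5 + 6 * c7 * y) ^ 2)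
      (fun x _ y _ => by rw [hvxx x y, hvxy x y, hvyx x y, hvyy x y])]
    exact M.semiH2_val c3 c4 c5 c6 c7
  have hS2nn : 0 ≤ semiH2R v (-1) 1 (-1) 1 := by
    rw [hS2]; exact Real.sqrt_nonneg _
  have hc6 : |c6| ≤ semiH2R v (-1) 1 (-1) 1 := by
    rw [hS2, ← Real.sqrt_sq_eq_abs]
    apply Real.sqrt_le_sqrt
    nlinarith [sq_nonneg c3, sq_nonneg c4, sq_nonneg c5, sq_nonneg c6, sq_nonneg c7]
  have hc7 : |c7| ≤ semiH2R v (-1) 1 (-1) 1 := by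
    rw [hS2, ← Real.sqrt_sq_eq_abs]
    apply Real.sqrt_le_sqrt
    nlinarith [sq_nonneg c3, sq_nonneg c4, sq_nonneg c5, sq_nonneg c6, sq_nonneg c7]
  -- identify the integrals appearing in B2
  have hIAeq : (∫ x in (-1 : ℝ)..1, ∫ y in (-1 : ℝ)..1, pdx (pdy (pdy u)) x y)
      = ∫ x in (-1 : ℝ)..1, ∫ y in (-1 : ℝ)..1, A2w (x, y) :=
    M.double_congr (fun x hx y hy => hA.1 (x, y) (hKU ⟨hx, hy⟩))
  have hJAeq : (∫ t in (-1 : ℝ)..1, pdx (pdy (pdy u)) 1 t)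
      = ∫ t in (-1 : ℝ)..1, A2w (1, t) := by
    apply intervalIntegral.integral_congr
    intro t ht
    rw [M.uIcc_eq] at ht
    exact hA.1 (1, t) (hKU ⟨h1m, ht⟩)
  have hIDeq : (∫ x in (-1 : ℝ)..1, ∫ y in (-1 : ℝ)..1, pdx (pdx (pdy u)) x y)
      = ∫ x in (-1 : ℝ)..1, ∫ y in (-1 : ℝ)..1, D2w (x, y) :=
    M.double_congr (fun x hx y hy => hD.1 (x, y) (hKU ⟨hx, hy⟩))
  have hJDeq : (∫ t in (-1 : ℝ)..1, pdx (pdx (pdy u)) t (-1))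
      = ∫ t in (-1 : ℝ)..1, D2w (t, -1) := by
    apply intervalIntegral.integral_congr
    intro t ht
    rw [M.uIcc_eq] at ht
    exact hD.1 (t, -1) (hKU ⟨ht, hm1⟩)
  -- decompose B2
  have hB2 : B2 u v
      = 2 * c6 * ((∫ x in (-1 : ℝ)..1, ∫ y in (-1 : ℝ)..1, pdx (pdy (pdy u)) x y)
          - 2 * (∫ t in (-1 : ℝ)..1, pdx (pdy (pdy u)) 1 t))
        + 2 * c7 * ((∫ x in (-1 : ℝ)..1, ∫ y in (-1 : ℝ)..1, pdx (pdx (pdy u)) x y)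
          - 2 * (∫ t in (-1 : ℝ)..1, pdx (pdx (pdy u)) t (-1))) := by
    simp only [B2, hv3x, hv3y, intervalIntegral.integral_mul_const,
      intervalIntegral.integral_const, smul_eq_mul]
    ring
  have hXA' : |(∫ x in (-1 : ℝ)..1, ∫ y in (-1 : ℝ)..1, pdx (pdy (pdy u)) x y)
      - 2 * (∫ t in (-1 : ℝ)..1, pdx (pdy (pdy u)) 1 t)| ≤ 4 * Real.sqrt J := by
    rw [hIAeq, hJAeq, hJdef]
    exact hXA
  have hXD' : |(∫ x in (-1 : ℝ)..1, ∫ y in (-1 : ℝ)..1, pdx (pdx (pdy u)) x y)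
      - 2 * (∫ t in (-1 : ℝ)..1, pdx (pdx (pdy u)) t (-1))| ≤ 4 * Real.sqrt J := by
    rw [hIDeq, hJDeq, hJdef]
    exact hXD
  have hXA4 : |(∫ x in (-1 : ℝ)..1, ∫ y in (-1 : ℝ)..1, pdx (pdy (pdy u)) x y)
      - 2 * (∫ t in (-1 : ℝ)..1, pdx (pdy (pdy u)) 1 t)| ≤ 4 * semiH4R u (-1) 1 (-1) 1 := by
    linarith
  have hXD4 : |(∫ x in (-1 : ℝ)..1, ∫ y in (-1 : ℝ)..1, pdx (pdx (pdy u)) x y)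
      - 2 * (∫ t in (-1 : ℝ)..1, pdx (pdx (pdy u)) t (-1))| ≤ 4 * semiH4R u (-1) 1 (-1) 1 := by
    linarith
  rw [hB2]
  have t1 : |c6| * |(∫ x in (-1 : ℝ)..1, ∫ y in (-1 : ℝ)..1, pdx (pdy (pdy u)) x y)
      - 2 * (∫ t in (-1 : ℝ)..1, pdx (pdy (pdy u)) 1 t)|
      ≤ semiH2R v (-1) 1 (-1) 1 * (4 * semiH4R u (-1) 1 (-1) 1) :=
    mul_le_mul hc6 hXA4 (abs_nonneg _) hS2nn
  have t2 : |c7| * |(∫ x in (-1 : ℝ)..1, ∫ y in (-1 : ℝ)..1, pdx (pdx (pdy u)) x y)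
      - 2 * (∫ t in (-1 : ℝ)..1, pdx (pdx (pdy u)) t (-1))|
      ≤ semiH2R v (-1) 1 (-1) 1 * (4 * semiH4R u (-1) 1 (-1) 1) :=
    mul_le_mul hc7 hXD4 (abs_nonneg _) hS2nn
  have habs : ∀ a b : ℝ, |2 * c6 * a + 2 * c7 * b| ≤ 2 * (|c6| * |a|) + 2 * (|c7| * |b|) := by
    intro a b
    calc |2 * c6 * a + 2 * c7 * b| ≤ |2 * c6 * a| + |2 * c7 * b| := abs_add_le _ _
      _ = 2 * (|c6| * |a|) + 2 * (|c7| * |b|) := by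
        rw [abs_mul, abs_mul, abs_mul, abs_mul]
        simp [abs_of_nonneg]
        ring
  calc |2 * c6 * _ + 2 * c7 * _| ≤ 2 * (|c6| * |_|) + 2 * (|c7| * |_|) := habs _ _
    _ ≤ 2 * (semiH2R v (-1) 1 (-1) 1 * (4 * semiH4R u (-1) 1 (-1) 1))
        + 2 * (semiH2R v (-1) 1 (-1) 1 * (4 * semiH4R u (-1) 1 (-1) 1)) := by linarith
    _ = 16 * semiH4R u (-1) 1 (-1) 1 * semiH2R v (-1) 1 (-1) 1 := by ring
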